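/- Let A be a commutative ring. If A is a weakly Arf ring, then for every x ∈ W(A) the ideal I = \overline{(x)} (the integral closure of the principal ideal xA) satisfies I² = xI; in particular every I ∈ Λ(A) satisfies I² = aI for some a ∈ I. Conversely, if A is Noetherian and for every I ∈ Λ(A) there exists a ∈ I with I² = aI, then A is a weakly Arf ring. -/

import Mathlib

open scoped TensorProduct

/-- `A` is a *weakly Arf ring*: whenever `x, y, z ∈ A` with `x` a non-zerodivisor on `A`
and the fractions `y/x` and `z/x` in the total ring of fractions `Q(A)` are integral
over `A`, then `y * z ∈ x A`. -/
def IsWeaklyArfRing (A : Type*) [CommRing A] : Prop :=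
  ∀ (x y z : A) (hx : x ∈ nonZeroDivisors A),
    IsIntegral A (IsLocalization.mk' (FractionRing A) y
      (⟨x, hx⟩ : nonZeroDivisors A)) →
    IsIntegral A (IsLocalization.mk' (FractionRing A) z
      (⟨x, hx⟩ : nonZeroDivisors A)) →
    y * z ∈ Ideal.span {x}

/-- `a` belongs to the integral closure of the ideal `I`: it satisfies an equation
`a ^ n + c 1 * a ^ (n - 1) + ⋯ + c n = 0` with `c i ∈ I ^ i`, for some `n ≥ 1`. -/
def MemIdealIntegralClosure {A : Type*} [CommRing A] (I : Ideal A) (a : A) : Prop :=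
  ∃ n : ℕ, 0 < n ∧ ∃ c : ℕ → A,
    (∀ i ∈ Finset.Icc 1 n, c i ∈ I ^ i) ∧
    a ^ n + ∑ i ∈ Finset.Icc 1 n, c i * a ^ (n - i) = 0

/-- The integral closure `Ī` of an ideal `I` of `A`, as a subset of `A`. -/
def idealIntegralClosure {A : Type*} [CommRing A] (I : Ideal A) : Set A :=
  {a | MemIdealIntegralClosure I a}

/-- An ideal `I` is integrally closed if `Ī = I`. -/
def Ideal.IsIntegrallyClosedIdeal {A : Type*} [CommRing A] (I : Ideal A) : Prop :=
  idealIntegralClosure I = (I : Set A)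

/-- `Λ(A)`: the set of ideals of `A` of the form `\overline{(x)}` (the integral closure
of the principal ideal `x A`) with `x` a non-zerodivisor on `A`. -/
def LambdaSet (A : Type*) [CommRing A] : Set (Ideal A) :=
  {J | ∃ x ∈ nonZeroDivisors A, (J : Set A) = idealIntegralClosure (Ideal.span {x})}


section WeaklyArfAux

open Polynomial Finset

variable {A : Type*} [CommRing A]

private lemma phi_pow_mul_mk_pow (x : A) (hx : x ∈ nonZeroDivisors A) (a : A) (k : ℕ) :
    algebraMap A (FractionRing A) (x ^ k) *
      (IsLocalization.mk' (FractionRing A) a (⟨x, hx⟩ : nonZeroDivisors A)) ^ k =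
      algebraMap A (FractionRing A) (a ^ k) := by
  rw [map_pow, map_pow, ← mul_pow]
  congr 1
  exact IsLocalization.mk'_spec' (FractionRing A) a ⟨x, hx⟩

private lemma keyB (x : A) (hx : x ∈ nonZeroDivisors A) (a : A) (n : ℕ) (d : ℕ → A) :
    algebraMap A (FractionRing A) (x ^ n) *
      ((IsLocalization.mk' (FractionRing A) a (⟨x, hx⟩ : nonZeroDivisors A)) ^ n +
        ∑ i ∈ Finset.Icc 1 n, algebraMap A (FractionRing A) (d i) *
          (IsLocalization.mk' (FractionRing A) a (⟨x, hx⟩ : nonZeroDivisors A)) ^ (n - i)) =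
      algebraMap A (FractionRing A) (a ^ n + ∑ i ∈ Finset.Icc 1 n, x ^ i * d i * a ^ (n - i)) := by
  set q := IsLocalization.mk' (FractionRing A) a (⟨x, hx⟩ : nonZeroDivisors A) with hq
  rw [mul_add, Finset.mul_sum, map_add, map_sum, phi_pow_mul_mk_pow]
  congr 1
  refine Finset.sum_congr rfl fun i hi => ?_
  obtain ⟨h1, h2⟩ := Finset.mem_Icc.mp hi
  have hxn : (x : A) ^ n = x ^ i * x ^ (n - i) := by rw [← pow_add]; congr 1; omega
  rw [hxn]
  calc algebraMap A (FractionRing A) (x ^ i * x ^ (n - i)) * (algebraMap A (FractionRing A) (d i) * q ^ (n - i))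
      = algebraMap A (FractionRing A) (x ^ i * d i) * (algebraMap A (FractionRing A) (x ^ (n-i)) * q ^ (n - i)) := by
        simp only [map_mul]; ring
    _ = algebraMap A (FractionRing A) (x ^ i * d i) * algebraMap A (FractionRing A) (a ^ (n-i)) := by
        rw [phi_pow_mul_mk_pow]
    _ = algebraMap A (FractionRing A) (x ^ i * d i * a ^ (n - i)) := by simp only [map_mul]

private lemma mem_closure_iff_isIntegral (x : A) (hx : x ∈ nonZeroDivisors A) (a : A) :
    MemIdealIntegralClosure (Ideal.span {x}) a ↔
    IsIntegral A (IsLocalization.mk' (FractionRing A) a (⟨x, hx⟩ : nonZeroDivisors A)) := by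
  set q := IsLocalization.mk' (FractionRing A) a (⟨x, hx⟩ : nonZeroDivisors A) with hq
  constructor
  · rintro ⟨n, hn, c, hc, heq⟩
    rcases subsingleton_or_nontrivial A with hA | hA
    · haveI : Subsingleton (FractionRing A) := Module.subsingleton A _
      exact ⟨X, monic_X, Subsingleton.elim _ _⟩
    -- extract divisors
    have hdiv : ∀ i, ∃ di, i ∈ Finset.Icc 1 n → c i = x ^ i * di := by
      intro i
      by_cases h : i ∈ Finset.Icc 1 n
      · have := hc i h
        rw [Ideal.span_singleton_pow, Ideal.mem_span_singleton'] at this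
        obtain ⟨di, hdi⟩ := this
        exact ⟨di, fun _ => by rw [← hdi, mul_comm]⟩
      · exact ⟨0, fun h' => absurd h' h⟩
    choose d hd using hdiv
    refine ⟨X ^ n + ∑ i ∈ Finset.Icc 1 n, C (d i) * X ^ (n - i), ?_, ?_⟩
    · refine monic_of_natDegree_le_of_coeff_eq_one n ?_ ?_
      · refine (natDegree_add_le _ _).trans ?_
        simp only [natDegree_X_pow, max_le_iff, le_refl, true_and]
        refine (natDegree_sum_le _ _).trans ?_
        refine Finset.fold_max_le n |>.mpr ?_ <;> try skip
        constructor
        · omega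
        · intro i hi
          exact (natDegree_C_mul_le _ _).trans (by simp [natDegree_X_pow])
      · rw [coeff_add, coeff_X_pow, if_pos rfl, finset_sum_coeff]
        have : ∀ i ∈ Finset.Icc 1 n, (C (d i) * X ^ (n - i)).coeff n = 0 := by
          intro i hi
          obtain ⟨h1, h2⟩ := Finset.mem_Icc.mp hi
          rw [coeff_C_mul, coeff_X_pow, if_neg (by omega), mul_zero]
        rw [Finset.sum_congr rfl this, Finset.sum_const_zero, add_zero]
    · have haeval : (aeval q) (X ^ n + ∑ i ∈ Finset.Icc 1 n, C (d i) * X ^ (n - i)) =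
          q ^ n + ∑ i ∈ Finset.Icc 1 n, algebraMap A (FractionRing A) (d i) * q ^ (n - i) := by
        simp [map_sum]
      rw [← aeval_def, haeval]
      have hu : IsUnit (algebraMap A (FractionRing A) (x ^ n)) :=
        IsLocalization.map_units (FractionRing A) ⟨x ^ n, pow_mem hx n⟩
      rw [← IsUnit.mul_right_eq_zero hu, keyB]
      have : a ^ n + ∑ i ∈ Finset.Icc 1 n, x ^ i * d i * a ^ (n - i) = 0 := by
        rw [← heq]
        congr 1
        refine Finset.sum_congr rfl fun i hi => ?_
        rw [hd i hi]
      rw [this, map_zero]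
  · rintro ⟨p, hmonic, heval⟩
    have heval' : (aeval q) p = 0 := heval
    rcases subsingleton_or_nontrivial A with hA | hA
    · exact ⟨1, one_pos, fun _ => 0, by simp, Subsingleton.elim _ _⟩
    haveI : Nontrivial (FractionRing A) := by
      refine ⟨⟨0, 1, fun h => ?_⟩⟩
      have := IsFractionRing.injective A (FractionRing A) (by simpa using h : (algebraMap A (FractionRing A)) 0 = (algebraMap A (FractionRing A)) 1)
      exact zero_ne_one this
    set n := p.natDegree with hn
    have hn1 : 0 < n := by
      rcases Nat.eq_zero_or_pos n with h0 | h
      · exfalso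
        have := (hmonic.natDegree_eq_zero).mp h0
        rw [this] at heval'
        simp at heval'
      · exact h
    have hsum : (aeval q) p = q ^ n + ∑ j ∈ Finset.range n, algebraMap A (FractionRing A) (p.coeff j) * q ^ j := by
      rw [aeval_eq_sum_range, Finset.sum_range_succ, ← hn, hmonic.coeff_natDegree, one_smul, add_comm]
      congr 1
      refine Finset.sum_congr rfl fun j hj => ?_
      rw [Algebra.smul_def]
    have hreindex : ∑ j ∈ Finset.range n, algebraMap A (FractionRing A) (p.coeff j) * q ^ j
        = ∑ i ∈ Finset.Icc 1 n, algebraMap A (FractionRing A) (p.coeff (n - i)) * q ^ (n - i) := by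
      refine Finset.sum_nbij' (fun j => n - j) (fun i => n - i) ?_ ?_ ?_ ?_ ?_
      · intro j hj; simp only [Finset.mem_range] at hj; simp only [Finset.mem_Icc]; omega
      · intro i hi; simp only [Finset.mem_Icc] at hi; simp only [Finset.mem_range]; omega
      · intro j hj; simp only [Finset.mem_range] at hj; omega
      · intro i hi; simp only [Finset.mem_Icc] at hi; omega
      · intro j hj; simp only [Finset.mem_range] at hj
        have h1 : n - (n - j) = j := by omega
        rw [h1]
    refine ⟨n, hn1, fun i => x ^ i * p.coeff (n - i), ?_, ?_⟩
    · intro i hi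
      rw [Ideal.span_singleton_pow, Ideal.mem_span_singleton']
      exact ⟨p.coeff (n - i), mul_comm _ _⟩
    · apply IsFractionRing.injective A (FractionRing A)
      rw [map_zero, ← keyB x hx a n (fun i => p.coeff (n - i))]
      rw [← hreindex, ← hsum, heval', mul_zero]

private lemma self_mem_closure (x : A) : MemIdealIntegralClosure (Ideal.span {x}) x := by
  refine ⟨1, one_pos, fun _ => -x, ?_, ?_⟩
  · intro i hi
    simp only [Finset.mem_Icc] at hi
    have : i = 1 := by omega
    subst this
    simp [Ideal.mem_span_singleton]
  · simp

private lemma mk'_mul_mk' (x : A) (hx : x ∈ nonZeroDivisors A) (u v c : A) (h : c * x = u * v) :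
    IsLocalization.mk' (FractionRing A) c (⟨x, hx⟩ : nonZeroDivisors A) =
      IsLocalization.mk' (FractionRing A) u (⟨x, hx⟩ : nonZeroDivisors A) *
      IsLocalization.mk' (FractionRing A) v (⟨x, hx⟩ : nonZeroDivisors A) := by
  rw [← IsLocalization.mk'_mul, ← h]
  rw [show ((⟨x, hx⟩ : nonZeroDivisors A) * ⟨x, hx⟩ : nonZeroDivisors A)
      = ⟨x, hx⟩ * ⟨x, hx⟩ from rfl]
  rw [IsLocalization.mk'_mul, IsLocalization.mk'_self, mul_one]

private lemma part1 (hWA : ∀ (x y z : A) (hx : x ∈ nonZeroDivisors A),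
    IsIntegral A (IsLocalization.mk' (FractionRing A) y (⟨x, hx⟩ : nonZeroDivisors A)) →
    IsIntegral A (IsLocalization.mk' (FractionRing A) z (⟨x, hx⟩ : nonZeroDivisors A)) →
    y * z ∈ Ideal.span {x})
    (x : A) (hx : x ∈ nonZeroDivisors A) (I : Ideal A)
    (hI : (I : Set A) = {a | MemIdealIntegralClosure (Ideal.span {x}) a}) :
    I ^ 2 = Ideal.span {x} * I := by
  have hmem : ∀ u : A, u ∈ I ↔ MemIdealIntegralClosure (Ideal.span {x}) u := by
    intro u
    constructor
    · intro h
      have : u ∈ (I : Set A) := h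
      rw [hI] at this; exact this
    · intro h
      have : u ∈ (I : Set A) := by rw [hI]; exact h
      exact this
  apply le_antisymm
  · rw [pow_two, Ideal.mul_le]
    intro u hu v hv
    have hui := (mem_closure_iff_isIntegral x hx u).mp ((hmem u).mp hu)
    have hvi := (mem_closure_iff_isIntegral x hx v).mp ((hmem v).mp hv)
    have hprod := hWA x u v hx hui hvi
    rw [Ideal.mem_span_singleton'] at hprod
    obtain ⟨c, hc⟩ := hprod
    have hci : IsIntegral A (IsLocalization.mk' (FractionRing A) c (⟨x, hx⟩ : nonZeroDivisors A)) := by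
      rw [mk'_mul_mk' x hx u v c hc]
      exact hui.mul hvi
    have hcI : c ∈ I := (hmem c).mpr ((mem_closure_iff_isIntegral x hx c).mpr hci)
    rw [Ideal.mem_span_singleton_mul]
    exact ⟨c, hcI, by rw [mul_comm]; exact hc⟩
  · have hxI : x ∈ I := (hmem x).mpr (self_mem_closure x)
    rw [pow_two]
    exact Ideal.mul_mono (Ideal.span_le.mpr (Set.singleton_subset_iff.mpr hxI)) le_rfl

private lemma part3 (hSt : ∀ I : Ideal A,
      (∃ x ∈ nonZeroDivisors A, (I : Set A) = {a | MemIdealIntegralClosure (Ideal.span {x}) a}) →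
      ∃ a ∈ I, I ^ 2 = Ideal.span {a} * I)
    (x y z : A) (hx : x ∈ nonZeroDivisors A)
    (hy : IsIntegral A (IsLocalization.mk' (FractionRing A) y (⟨x, hx⟩ : nonZeroDivisors A)))
    (hz : IsIntegral A (IsLocalization.mk' (FractionRing A) z (⟨x, hx⟩ : nonZeroDivisors A))) :
    y * z ∈ Ideal.span {x} := by
  -- the ideal of integral fractions
  set φ := algebraMap A (FractionRing A) with hφ
  have hmk : ∀ (u : A) (t : FractionRing A), φ x * t = φ u →
      t = IsLocalization.mk' (FractionRing A) u (⟨x, hx⟩ : nonZeroDivisors A) := by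
    intro u t h
    have hu : φ x * IsLocalization.mk' (FractionRing A) u (⟨x, hx⟩ : nonZeroDivisors A) = φ u :=
      IsLocalization.mk'_spec' _ u ⟨x, hx⟩
    have hunit : IsUnit (φ x) := IsLocalization.map_units (FractionRing A) ⟨x, hx⟩
    exact hunit.mul_left_cancel (by rw [h, hu])
  let I : Ideal A :=
    { carrier := {a | IsIntegral A (IsLocalization.mk' (FractionRing A) a (⟨x, hx⟩ : nonZeroDivisors A))}
      add_mem' := by
        intro p q hp hq
        have h1 := IsLocalization.mk'_spec' (FractionRing A) p (⟨x, hx⟩ : nonZeroDivisors A)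
        have h2 := IsLocalization.mk'_spec' (FractionRing A) q (⟨x, hx⟩ : nonZeroDivisors A)
        have hthis := hmk (p + q)
          (IsLocalization.mk' (FractionRing A) p (⟨x, hx⟩ : nonZeroDivisors A) +
           IsLocalization.mk' (FractionRing A) q (⟨x, hx⟩ : nonZeroDivisors A))
          (by rw [mul_add, h1, h2, map_add])
        rw [Set.mem_setOf_eq, ← hthis]
        exact hp.add hq
      zero_mem' := by
        show IsIntegral A (IsLocalization.mk' (FractionRing A) (0:A) (⟨x, hx⟩ : nonZeroDivisors A))
        rw [IsLocalization.mk'_zero]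
        exact isIntegral_zero
      smul_mem' := by
        intro r a ha
        have hs := IsLocalization.mk'_spec' (FractionRing A) a (⟨x, hx⟩ : nonZeroDivisors A)
        have hthis := hmk (r * a)
          (φ r * IsLocalization.mk' (FractionRing A) a (⟨x, hx⟩ : nonZeroDivisors A))
          (by rw [← mul_assoc, mul_comm (φ x) (φ r), mul_assoc, hs, ← map_mul])
        show IsIntegral A (IsLocalization.mk' (FractionRing A) (r • a) (⟨x, hx⟩ : nonZeroDivisors A))
        rw [smul_eq_mul, ← hthis]
        exact (isIntegral_algebraMap).mul ha }
  have hmemI : ∀ u : A, u ∈ I ↔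
      IsIntegral A (IsLocalization.mk' (FractionRing A) u (⟨x, hx⟩ : nonZeroDivisors A)) :=
    fun u => Iff.rfl
  have hIset : (I : Set A) = {a | MemIdealIntegralClosure (Ideal.span {x}) a} := by
    ext u
    rw [SetLike.mem_coe, hmemI u, Set.mem_setOf_eq, mem_closure_iff_isIntegral x hx u]
  obtain ⟨a, haI, hstab⟩ := hSt I ⟨x, hx, hIset⟩
  have hxI : x ∈ I := by
    rw [hmemI, IsLocalization.mk'_self]
    exact isIntegral_one
  have hyI : y ∈ I := hy
  have hzI : z ∈ I := hz
  -- a is a non-zerodivisor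
  have hxx : x * x ∈ Ideal.span {a} * I := by
    rw [← hstab, pow_two]; exact Ideal.mul_mem_mul hxI hxI
  obtain ⟨t, htI, hxt⟩ := Ideal.mem_span_singleton_mul.mp hxx
  have ha : a ∈ nonZeroDivisors A := by
    rw [mem_nonZeroDivisors_iff_right]
    intro c hc
    have h1 : c * (x * x) = 0 := by rw [← hxt, ← mul_assoc, hc, zero_mul]
    have h2 : (c * x) * x = 0 := by rw [mul_assoc]; exact h1
    exact mem_nonZeroDivisors_iff_right.mp hx c (mem_nonZeroDivisors_iff_right.mp hx (c * x) h2)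
  -- claim1
  have claim1 : ∀ k : ℕ, x ^ k * a ∈ Ideal.span {a ^ k} * I := by
    intro k
    induction k with
    | zero => simpa [Ideal.span_singleton_one] using haI
    | succ k ih =>
      have h1 : x * (x ^ k * a) ∈ Ideal.span {x} * (Ideal.span {a ^ k} * I) :=
        Ideal.mul_mem_mul (Ideal.mem_span_singleton_self x) ih
      have h2 : Ideal.span {x} * (Ideal.span {a ^ k} * I) ≤ Ideal.span {a ^ (k+1)} * I := by
        calc Ideal.span {x} * (Ideal.span {a ^ k} * I)
            = Ideal.span {a ^ k} * (Ideal.span {x} * I) := by ring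
          _ ≤ Ideal.span {a ^ k} * (I * I) :=
              Ideal.mul_mono le_rfl (Ideal.mul_mono
                (Ideal.span_le.mpr (Set.singleton_subset_iff.mpr hxI)) le_rfl)
          _ = Ideal.span {a ^ k} * I ^ 2 := by rw [pow_two]
          _ = Ideal.span {a ^ k} * (Ideal.span {a} * I) := by rw [hstab]
          _ = Ideal.span {a ^ (k+1)} * I := by
              rw [← mul_assoc, Ideal.span_singleton_mul_span_singleton, ← pow_succ]
      have h3 := h2 h1
      have : x ^ (k+1) * a = x * (x ^ k * a) := by ring
      rw [this]
      exact h3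
  -- integral equation for a over (x)
  obtain ⟨n, hn, c, hc, heq⟩ := (mem_closure_iff_isIntegral x hx a).mpr haI
  -- a^(n+1) ∈ (x a^(n-1)) I
  have hterm : ∀ i ∈ Finset.Icc 1 n, c i * a ^ (n - i) * a ∈ Ideal.span {x * a ^ (n-1)} * I := by
    intro i hi
    obtain ⟨h1, h2⟩ := Finset.mem_Icc.mp hi
    obtain ⟨e, he⟩ := Ideal.mem_span_singleton'.mp
      (by rw [← Ideal.span_singleton_pow]; exact hc i hi : c i ∈ Ideal.span {x ^ i})
    have key : (x * a ^ (n - i)) * (x ^ (i-1) * a) ∈ Ideal.span {x * a ^ (n-1)} * I := by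
      have := Ideal.mul_mem_mul (Ideal.mem_span_singleton_self (x * a ^ (n - i))) (claim1 (i-1))
      have heq2 : Ideal.span {x * a ^ (n-i)} * (Ideal.span {a ^ (i-1)} * I)
          = Ideal.span {x * a ^ (n-1)} * I := by
        have hgen : x * a ^ (n - i) * a ^ (i - 1) = x * a ^ (n - 1) := by
          have hexp : n - i + (i - 1) = n - 1 := by omega
          rw [mul_assoc, ← pow_add, hexp]
        rw [← mul_assoc, Ideal.span_singleton_mul_span_singleton, hgen]
      rw [heq2] at this
      exact this
    have hre : c i * a ^ (n - i) * a = e * ((x * a ^ (n - i)) * (x ^ (i-1) * a)) := by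
      rw [← he]
      have : x ^ i = x * x ^ (i - 1) := by
        rw [← pow_succ']
        congr 1
        omega
      rw [this]; ring
    rw [hre]
    exact Ideal.mul_mem_left _ _ key
  have hsum : a ^ (n+1) ∈ Ideal.span {x * a ^ (n-1)} * I := by
    have hzero : a ^ (n+1) + ∑ i ∈ Finset.Icc 1 n, c i * a ^ (n - i) * a = 0 := by
      have := congrArg (· * a) heq
      simpa [add_mul, Finset.sum_mul, pow_succ] using this
    have : a ^ (n+1) = ∑ i ∈ Finset.Icc 1 n, -(c i * a ^ (n - i) * a) := by
      rw [Finset.sum_neg_distrib]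
      exact eq_neg_of_add_eq_zero_left hzero
    rw [this]
    exact Ideal.sum_mem _ fun i hi => neg_mem (hterm i hi)
  obtain ⟨w, hwI, hw⟩ := Ideal.mem_span_singleton_mul.mp hsum
  -- cancel a^(n-1): a^2 = x * w
  have haw : a ^ 2 = x * w := by
    have h1 : a ^ (n-1) * (a ^ 2 - x * w) = 0 := by
      have h2 : a ^ (n-1) * a ^ 2 = a ^ (n+1) := by
        rw [← pow_add]
        congr 1
        omega
      rw [mul_sub, h2, ← hw]
      ring
    have h3 := mem_nonZeroDivisors_iff_right.mp (pow_mem ha (n-1)) _ (by rw [mul_comm] at h1; exact h1)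
    exact sub_eq_zero.mp h3
  -- finish
  have hyz : y * z ∈ Ideal.span {a} * I := by
    rw [← hstab, pow_two]; exact Ideal.mul_mem_mul hyI hzI
  obtain ⟨u, huI, hu⟩ := Ideal.mem_span_singleton_mul.mp hyz
  have hwu : w * u ∈ Ideal.span {a} * I := by
    rw [← hstab, pow_two]; exact Ideal.mul_mem_mul hwI huI
  obtain ⟨v, hvI, hv⟩ := Ideal.mem_span_singleton_mul.mp hwu
  have hfinal : a * (y * z - x * v) = 0 := by
    have : a * (y * z) = a * (x * v) := by
      calc a * (y * z) = a ^ 2 * u := by rw [← hu]; ring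
        _ = x * w * u := by rw [haw]
        _ = x * (w * u) := by ring
        _ = x * (a * v) := by rw [hv]
        _ = a * (x * v) := by ring
    rw [mul_sub, this, sub_self]
  have hfin2 : y * z = x * v := sub_eq_zero.mp (mem_nonZeroDivisors_iff_right.mp ha _ (by rw [mul_comm] at hfinal; exact hfinal))
  rw [Ideal.mem_span_singleton']
  exact ⟨v, by rw [mul_comm]; exact hfin2.symm⟩

end WeaklyArfAux

/-- If `A` is weakly Arf then for every non-zerodivisor `x` the integral closure
`I = \overline{(x)}` satisfies `I² = x I`; in particular every `I ∈ Λ(A)` satisfies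
`I² = a I` for some `a ∈ I`.  Conversely, if `A` is Noetherian and every `I ∈ Λ(A)`
satisfies `I² = a I` for some `a ∈ I`, then `A` is weakly Arf. -/


theorem weaklyArf_iff_stable_integral_closures (A : Type*) [CommRing A] :
    (IsWeaklyArfRing A →
      ∀ x ∈ nonZeroDivisors A, ∀ I : Ideal A,
        (I : Set A) = idealIntegralClosure (Ideal.span {x}) →
          I ^ 2 = Ideal.span {x} * I) ∧
    (IsWeaklyArfRing A →
      ∀ I ∈ LambdaSet A, ∃ a ∈ I, I ^ 2 = Ideal.span {a} * I) ∧
    (IsNoetherianRing A →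
      (∀ I ∈ LambdaSet A, ∃ a ∈ I, I ^ 2 = Ideal.span {a} * I) →
      IsWeaklyArfRing A) := by
  refine ⟨?_, ?_, ?_⟩
  · intro hWA x hx I hI
    exact part1 hWA x hx I hI
  · intro hWA I hIL
    obtain ⟨x, hx, hset⟩ := hIL
    have hxI : x ∈ I := by
      have : x ∈ (I : Set A) := by rw [hset]; exact self_mem_closure x
      exact this
    exact ⟨x, hxI, part1 hWA x hx I hset⟩
  · intro _ hSt x y z hx hy hz
    exact part3 (fun I h => hSt I h) x y z hx hy hz
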